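/- Every unstable k-subset of [n] contains an odd element. Consequently, assigning to each unstable k-subset its minimal odd element gives a proper coloring, with at most ⌈n/2⌉ colors, of the graph U(n,k) whose vertices are the unstable k-subsets of [n] and whose edges join disjoint sets. -/
import Mathlib


/-- A subset `A` of `[n] = {1,...,n}` is unstable if it contains two cyclically
consecutive elements: some `i` with `i, i+1 ∈ A`, or both `n` and `1`. -/
def IsUnstable (n : ℕ) (A : Finset ℕ) : Prop :=
  (∃ i, i ∈ A ∧ i + 1 ∈ A) ∨ (n ∈ A ∧ 1 ∈ A)

/-- The minimal odd element of a set (as an infimum in `ℕ`). -/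
noncomputable def minOdd (A : Finset ℕ) : ℕ :=
  sInf {x | x ∈ A ∧ Odd x}

lemma exists_odd_of_unstable {n : ℕ} {A : Finset ℕ} (h : IsUnstable n A) :
    ∃ x ∈ A, Odd x := by
  rcases h with ⟨i, hi, hi1⟩ | ⟨_, h1⟩
  · rcases Nat.even_or_odd i with he | ho
    · exact ⟨i + 1, hi1, Even.add_one he⟩
    · exact ⟨i, hi, ho⟩
  · exact ⟨1, h1, odd_one⟩

lemma minOdd_mem {n : ℕ} {A : Finset ℕ} (h : IsUnstable n A) :
    minOdd A ∈ A ∧ Odd (minOdd A) := by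
  obtain ⟨x, hx, hox⟩ := exists_odd_of_unstable h
  exact Nat.sInf_mem (⟨x, hx, hox⟩ : {x | x ∈ A ∧ Odd x}.Nonempty)

lemma cardOdd (n : ℕ) : ((Finset.Icc 1 n).filter (fun x => Odd x)).card ≤ (n + 1) / 2 := by
  induction n with
  | zero => simp
  | succ m ih =>
    have : Finset.Icc 1 (m + 1) = insert (m + 1) (Finset.Icc 1 m) := by
      ext x; simp [Finset.mem_Icc]; omega
    rw [this, Finset.filter_insert]
    by_cases h : Odd (m + 1)
    · have hc := Finset.card_insert_le (m + 1) ((Finset.Icc 1 m).filter (fun x => Odd x))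
      rw [if_pos h]
      rcases h with ⟨j, hj⟩
      omega
    · rw [if_neg h]
      omega

theorem stmt4 (n k : ℕ) :
    (∀ A : Finset ℕ, A ⊆ Finset.Icc 1 n → A.card = k → IsUnstable n A →
      (∃ x ∈ A, Odd x) ∧ minOdd A ∈ (Finset.Icc 1 n).filter (fun x => Odd x)) ∧
    (∀ A B : Finset ℕ,
      A ⊆ Finset.Icc 1 n → A.card = k → IsUnstable n A →
      B ⊆ Finset.Icc 1 n → B.card = k → IsUnstable n B →
      Disjoint A B → minOdd A ≠ minOdd B) ∧
    ((Finset.Icc 1 n).filter (fun x => Odd x)).card ≤ (n + 1) / 2 := by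
  refine ⟨?_, ?_, cardOdd n⟩
  · intro A hA _ hU
    obtain ⟨hm, ho⟩ := minOdd_mem hU
    exact ⟨exists_odd_of_unstable hU, Finset.mem_filter.2 ⟨hA hm, ho⟩⟩
  · intro A B _ _ hUA _ _ hUB hd heq
    exact Finset.disjoint_left.1 hd (minOdd_mem hUA).1 (heq ▸ (minOdd_mem hUB).1)
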